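/- Conversely, if the quadratic function f(x) = xᵀ A x + 2 bᵀ x (with A real symmetric) attains a minimum over ℝ^p, then A is positive semidefinite and (I - A A⁺) b = 0. -/

import Mathlib

open Matrix

/-- The four Penrose conditions characterizing the Moore–Penrose pseudoinverse. -/
def IsMoorePenrose {m n : ℕ} (A : Matrix (Fin m) (Fin n) ℝ)
    (Ap : Matrix (Fin n) (Fin m) ℝ) : Prop :=
  A * Ap * A = A ∧ Ap * A * Ap = Ap ∧ (A * Ap)ᵀ = A * Ap ∧ (Ap * A)ᵀ = Ap * A

lemma quad_aux (L c : ℝ) (h : ∀ t : ℝ, 0 ≤ 2*t*L + t^2*c) : 0 ≤ c ∧ L = 0 := by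
  have hc : 0 ≤ c := by
    by_contra hc
    push_neg at hc
    have h1 : 0 < -c := by linarith
    set t : ℝ := (2*|L|+1)/(-c) with ht
    have htc : t * (-c) = 2*|L|+1 := div_mul_cancel₀ _ (ne_of_gt h1)
    have h2 : L ≤ |L| := le_abs_self L
    have h3 : 0 ≤ |L| := abs_nonneg L
    have ht0 : 0 < t := div_pos (by linarith) h1
    have := h t
    nlinarith [mul_pos ht0 ht0, mul_le_mul_of_nonneg_left h2 (le_of_lt ht0)]
  refine ⟨hc, ?_⟩
  have hc1 : 0 < c + 1 := by linarith
  set t : ℝ := -L/(c+1) with ht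
  have htc : t * (c+1) = -L := div_mul_cancel₀ _ (ne_of_gt hc1)
  have := h t
  nlinarith [sq_nonneg t, sq_nonneg L, mul_self_nonneg t]

lemma symm_dot {p : ℕ} (A : Matrix (Fin p) (Fin p) ℝ) (hA : A.IsSymm)
    (x v : Fin p → ℝ) : x ⬝ᵥ A *ᵥ v = v ⬝ᵥ A *ᵥ x := by
  rw [dotProduct_mulVec, ← mulVec_transpose, hA.eq, dotProduct_comm]

/-- If the quadratic function `f(x) = xᵀ A x + 2 bᵀ x` (with `A` real symmetric) attains a
minimum over `ℝ^p`, then `A` is positive semidefinite and `(I - A A⁺) b = 0`. -/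
theorem quadratic_min_necessary {p : ℕ} (A Ap : Matrix (Fin p) (Fin p) ℝ) (b : Fin p → ℝ)
    (hA : A.IsSymm) (hMP : IsMoorePenrose A Ap)
    (hmin : ∃ x₀ : Fin p → ℝ, ∀ x : Fin p → ℝ,
      x₀ ⬝ᵥ (A *ᵥ x₀) + 2 * (b ⬝ᵥ x₀) ≤ x ⬝ᵥ (A *ᵥ x) + 2 * (b ⬝ᵥ x)) :
    A.PosSemidef ∧ (1 - A * Ap) *ᵥ b = 0 := by
  obtain ⟨x₀, h⟩ := hmin
  have key : ∀ (v : Fin p → ℝ) (t : ℝ),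
      0 ≤ 2*t*(v ⬝ᵥ (A *ᵥ x₀) + b ⬝ᵥ v) + t^2*(v ⬝ᵥ A *ᵥ v) := by
    intro v t
    have := h (x₀ + t • v)
    simp only [mulVec_add, mulVec_smul, dotProduct_add, add_dotProduct,
      smul_dotProduct, dotProduct_smul, smul_eq_mul] at this
    have hs : x₀ ⬝ᵥ A *ᵥ v = v ⬝ᵥ A *ᵥ x₀ := symm_dot A hA x₀ v
    rw [hs] at this
    linarith [this]
  have main : ∀ v : Fin p → ℝ, 0 ≤ v ⬝ᵥ A *ᵥ v ∧ v ⬝ᵥ (A *ᵥ x₀) + b ⬝ᵥ v = 0 :=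
    fun v => quad_aux _ _ (key v)
  have hww : (A *ᵥ x₀ + b) ⬝ᵥ (A *ᵥ x₀ + b) = 0 := by
    rw [dotProduct_add, dotProduct_comm _ b]
    exact (main _).2
  have hb0 : A *ᵥ x₀ + b = 0 := dotProduct_self_eq_zero.mp hww
  constructor
  · refine Matrix.PosSemidef.of_dotProduct_mulVec_nonneg ?_ ?_
    · have : Aᴴ = Aᵀ := by ext i j; simp
      rw [Matrix.IsHermitian, this, hA.eq]
    · intro x
      simpa using (main x).1
  · have hb : b = -(A *ᵥ x₀) := eq_neg_of_add_eq_zero_right hb0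
    obtain ⟨h1, -, -, -⟩ := hMP
    have hz : (1 - A * Ap) * A = 0 := by rw [sub_mul, one_mul, h1, sub_self]
    rw [hb, mulVec_neg, mulVec_mulVec, hz, zero_mulVec, neg_zero]
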